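/- Assume β̄ > α > 0, c > 0, u ≠ 0, and that the discriminant D = (β̄c − u)² + 4uc(β̄ − α) satisfies D ≥ 0. Then √D > |u − β̄c| if u > 0, and √D < |u − β̄c| if u < 0; consequently i* = ((u − β̄c) + √D)/(2uc) is strictly positive in both cases. -/
import Mathlib


/-- With `D = (β̄c − u)² + 4uc(β̄ − α) ≥ 0`: `√D > |u − β̄c|` if `u > 0`,
`√D < |u − β̄c|` if `u < 0`; hence `i* > 0` in both cases. -/
theorem ibin_root_positive (β α u c : ℝ)
    (hα : 0 < α) (hβα : α < β) (hc : 0 < c) (hu : u ≠ 0)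
    (hD : 0 ≤ (β * c - u) ^ 2 + 4 * u * c * (β - α)) :
    (0 < u → |u - β * c| < Real.sqrt ((β * c - u) ^ 2 + 4 * u * c * (β - α))) ∧
    (u < 0 → Real.sqrt ((β * c - u) ^ 2 + 4 * u * c * (β - α)) < |u - β * c|) ∧
    0 < ((u - β * c) + Real.sqrt ((β * c - u) ^ 2 + 4 * u * c * (β - α)))
          / (2 * u * c) := by
  have habs : |u - β * c| = Real.sqrt ((β * c - u) ^ 2) := by
    rw [Real.sqrt_sq_eq_abs, abs_sub_comm]
  have hpos : 0 < u → |u - β * c| <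
      Real.sqrt ((β * c - u) ^ 2 + 4 * u * c * (β - α)) := by
    intro hu0
    have h1 : (β * c - u) ^ 2 < (β * c - u) ^ 2 + 4 * u * c * (β - α) := by
      nlinarith [mul_pos (mul_pos hu0 hc) (sub_pos.mpr hβα)]
    rw [habs]
    exact Real.sqrt_lt_sqrt (sq_nonneg _) h1
  have hneg : u < 0 → Real.sqrt ((β * c - u) ^ 2 + 4 * u * c * (β - α)) <
      |u - β * c| := by
    intro hu0
    have h1 : (β * c - u) ^ 2 + 4 * u * c * (β - α) < (β * c - u) ^ 2 := by
      nlinarith [mul_neg_of_neg_of_pos (mul_neg_of_neg_of_pos hu0 hc) (sub_pos.mpr hβα)]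
    rw [habs]
    exact Real.sqrt_lt_sqrt hD h1
  refine ⟨hpos, hneg, ?_⟩
  rcases lt_or_gt_of_ne hu with hn | hp
  · have h2 := hneg hn
    have hbc : u - β * c < 0 := by nlinarith
    rw [abs_of_neg hbc] at h2
    have hnum : (u - β * c) + Real.sqrt ((β * c - u) ^ 2 + 4 * u * c * (β - α)) < 0 := by
      linarith
    have hden : 2 * u * c < 0 := by nlinarith
    exact div_pos_of_neg_of_neg hnum hden
  · have h2 := hpos hp
    have h3 := neg_abs_le (u - β * c)
    have hnum : 0 < (u - β * c) + Real.sqrt ((β * c - u) ^ 2 + 4 * u * c * (β - α)) := by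
      linarith
    have hden : 0 < 2 * u * c := by positivity
    exact div_pos hnum hden
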